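/- Let W and V be nonzero finite-dimensional real inner product spaces with orthogonal direct sum decompositions W = W_1 ⊕ ... ⊕ W_q and V = V_0 ⊕ V_1 ⊕ ... ⊕ V_p (q ≤ p). For w ∈ W write w_j for the orthogonal projection of w onto W_j, and for v ∈ V write v_j for the orthogonal projection onto V_j. Suppose φ : W → V satisfies: (i) φ(w)_0 = v_0 is a fixed nonzero vector independent of w; (ii) φ(w)_1 = T_1 w_1; (iii) for 1 < j ≤ q, φ(w)_j = T_j w_j + u_j(w_1 + ... + w_{j-1}), where each T_j : W_j → V_j is an injective linear map and each u_j is a polynomial map from W_1 ⊕ ... ⊕ W_{j-1} to V_j (i.e. a finite sum of diagonal evaluations of multilinear maps). Then there exist constants C > 0 and m > 0 such that for all w ∈ W, ‖φ(w)‖ ≥ C·(1 + ‖w‖²)^m. -/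

import Mathlib

open scoped RealInnerProductSpace

/-- `u : E → F` is a polynomial map: a finite sum of diagonal evaluations of
multilinear maps (the `k = 0` term being a constant). -/
def IsPolynomialMap {E F : Type*} [NormedAddCommGroup E] [Module ℝ E]
    [NormedAddCommGroup F] [Module ℝ F] (u : E → F) : Prop :=
  ∃ d : ℕ, ∃ A : (k : ℕ) → MultilinearMap ℝ (fun _ : Fin k => E) F,
    ∀ x : E, u x = ∑ k ∈ Finset.range (d + 1), A k (fun _ => x)

lemma multilinear_diag_bound {E F : Type*} [NormedAddCommGroup E] [NormedSpace ℝ E]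
    [FiniteDimensional ℝ E] [NormedAddCommGroup F] [NormedSpace ℝ F]
    {k : ℕ} (A : MultilinearMap ℝ (fun _ : Fin k => E) F) :
    ∃ C : ℝ, 0 ≤ C ∧ ∀ x : E, ‖A (fun _ => x)‖ ≤ C * ‖x‖ ^ k := by
  classical
  set n := Module.finrank ℝ E
  set b : Module.Basis (Fin n) ℝ E := Module.finBasis ℝ E
  set L : E →L[ℝ] (Fin n → ℝ) := LinearMap.toContinuousLinearMap b.equivFun.toLinearMap
  have hcoord : ∀ (x : E) (i : Fin n), |b.equivFun x i| ≤ ‖L‖ * ‖x‖ := by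
    intro x i
    calc |b.equivFun x i| = ‖(L x) i‖ := rfl
      _ ≤ ‖L x‖ := norm_le_pi_norm _ i
      _ ≤ ‖L‖ * ‖x‖ := L.le_opNorm x
  refine ⟨∑ r : Fin k → Fin n, ‖A (fun i => b (r i))‖ * ‖L‖ ^ k, by positivity, fun x => ?_⟩
  have hx : (fun _ : Fin k => x) = fun _ : Fin k => ∑ j : Fin n, b.equivFun x j • b j := by
    funext i
    rw [b.sum_equivFun x]
  rw [hx, A.map_sum]
  calc ‖∑ r : Fin k → Fin n, A (fun i => b.equivFun x (r i) • b (r i))‖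
      ≤ ∑ r : Fin k → Fin n, ‖A (fun i => b.equivFun x (r i) • b (r i))‖ := norm_sum_le _ _
    _ ≤ ∑ r : Fin k → Fin n, ‖A (fun i => b (r i))‖ * ‖L‖ ^ k * ‖x‖ ^ k := by
        refine Finset.sum_le_sum fun r _ => ?_
        rw [A.map_smul_univ (fun i => b.equivFun x (r i)) (fun i => b (r i))]
        rw [norm_smul]
        have h1 : ‖∏ i : Fin k, b.equivFun x (r i)‖ ≤ (‖L‖ * ‖x‖) ^ k := by
          rw [Real.norm_eq_abs, Finset.abs_prod]
          calc ∏ i : Fin k, |b.equivFun x (r i)| ≤ ∏ _i : Fin k, (‖L‖ * ‖x‖) := by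
                refine Finset.prod_le_prod (fun i _ => abs_nonneg _) (fun i _ => hcoord x (r i))
            _ = (‖L‖ * ‖x‖) ^ k := by simp
        calc ‖∏ i : Fin k, b.equivFun x (r i)‖ * ‖A fun i => b (r i)‖
            ≤ (‖L‖ * ‖x‖) ^ k * ‖A fun i => b (r i)‖ :=
              mul_le_mul_of_nonneg_right h1 (norm_nonneg _)
          _ = ‖A fun i => b (r i)‖ * ‖L‖ ^ k * ‖x‖ ^ k := by ring
    _ = (∑ r : Fin k → Fin n, ‖A (fun i => b (r i))‖ * ‖L‖ ^ k) * ‖x‖ ^ k := by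
        rw [Finset.sum_mul]

lemma isPolynomialMap_bound {E F : Type*} [NormedAddCommGroup E] [NormedSpace ℝ E]
    [FiniteDimensional ℝ E] [NormedAddCommGroup F] [NormedSpace ℝ F]
    {u : E → F} (h : IsPolynomialMap u) :
    ∃ D : ℝ, 0 ≤ D ∧ ∃ d : ℕ, ∀ x : E, ‖u x‖ ≤ D * (1 + ‖x‖ ^ 2) ^ d := by
  obtain ⟨d, A, hA⟩ := h
  choose C hC0 hC using fun k => multilinear_diag_bound (A k)
  refine ⟨∑ k ∈ Finset.range (d + 1), C k, Finset.sum_nonneg fun k _ => hC0 k, d, fun x => ?_⟩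
  have hbase : (1 : ℝ) ≤ 1 + ‖x‖ ^ 2 := by nlinarith [sq_nonneg ‖x‖]
  rw [hA x]
  calc ‖∑ k ∈ Finset.range (d + 1), A k (fun _ => x)‖
      ≤ ∑ k ∈ Finset.range (d + 1), ‖A k (fun _ => x)‖ := norm_sum_le _ _
    _ ≤ ∑ k ∈ Finset.range (d + 1), C k * (1 + ‖x‖ ^ 2) ^ d := by
        refine Finset.sum_le_sum fun k hk => ?_
        refine (hC k x).trans ?_
        refine mul_le_mul_of_nonneg_left ?_ (hC0 k)
        calc ‖x‖ ^ k ≤ (1 + ‖x‖ ^ 2) ^ k := by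
              refine pow_le_pow_left₀ (norm_nonneg x) ?_ k
              nlinarith [sq_nonneg (‖x‖ - 1), norm_nonneg x]
          _ ≤ (1 + ‖x‖ ^ 2) ^ d :=
              pow_le_pow_right₀ hbase (Finset.mem_range_succ_iff.mp hk)
    _ = (∑ k ∈ Finset.range (d + 1), C k) * (1 + ‖x‖ ^ 2) ^ d := (Finset.sum_mul _ _ _).symm

lemma linear_injective_bound {E F : Type*} [NormedAddCommGroup E] [NormedSpace ℝ E]
    [FiniteDimensional ℝ E] [NormedAddCommGroup F] [NormedSpace ℝ F]
    (T : E →ₗ[ℝ] F) (hT : Function.Injective T) :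
    ∃ c : ℝ, 0 < c ∧ ∀ x : E, c * ‖x‖ ≤ ‖T x‖ := by
  set e := LinearEquiv.ofInjective T hT
  set L : (LinearMap.range T) →L[ℝ] E :=
    LinearMap.toContinuousLinearMap e.symm.toLinearMap
  refine ⟨(‖L‖ + 1)⁻¹, by positivity, fun x => ?_⟩
  have h1 : ‖x‖ ≤ ‖L‖ * ‖T x‖ := by
    have hLe : L (e x) = x := e.symm_apply_apply x
    have hnorm : ‖e x‖ = ‖T x‖ := by
      have : ((e x : F)) = T x := LinearEquiv.ofInjective_apply T x
      rw [show ‖e x‖ = ‖(e x : F)‖ from rfl, this]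
    calc ‖x‖ = ‖L (e x)‖ := by rw [hLe]
      _ ≤ ‖L‖ * ‖e x‖ := L.le_opNorm _
      _ = ‖L‖ * ‖T x‖ := by rw [hnorm]
  have h2 : ‖x‖ ≤ (‖L‖ + 1) * ‖T x‖ := by nlinarith [norm_nonneg (T x)]
  calc (‖L‖ + 1)⁻¹ * ‖x‖ ≤ (‖L‖ + 1)⁻¹ * ((‖L‖ + 1) * ‖T x‖) := by
        refine mul_le_mul_of_nonneg_left h2 (by positivity)
    _ = ‖T x‖ := by field_simp

lemma norm_orthogonalProjection_le'' {V : Type*} [NormedAddCommGroup V]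
    [InnerProductSpace ℝ V] (K : Submodule ℝ V) [K.HasOrthogonalProjection] (v : V) :
    ‖(Submodule.orthogonalProjectionOnto K v : V)‖ ≤ ‖v‖ := by
  calc ‖(Submodule.orthogonalProjectionOnto K v : V)‖ = ‖Submodule.orthogonalProjectionOnto K v‖ := rfl
    _ ≤ ‖Submodule.orthogonalProjectionOnto K‖ * ‖v‖ := (Submodule.orthogonalProjectionOnto K).le_opNorm v
    _ ≤ 1 * ‖v‖ := mul_le_mul_of_nonneg_right (Submodule.orthogonalProjectionOnto_norm_le K) (norm_nonneg v)
    _ = ‖v‖ := one_mul _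

set_option maxHeartbeats 1600000 in
/-- **Key lemma** (Wallach, after Harish-Chandra).  Let `W = W₁ ⊕ ⋯ ⊕ W_q` and
`V = V₀ ⊕ V₁ ⊕ ⋯ ⊕ V_p` (with `q ≤ p`) be orthogonal decompositions of nonzero
finite-dimensional real inner product spaces, and let `φ : W → V` satisfy:
the `V₀`-component of `φ w` is a fixed nonzero vector `v₀`; the `V₁`-component
of `φ w` is `T₁ w₁`; and for `1 < j ≤ q` the `V_j`-component of `φ w` is
`T_j w_j + u_j (w₁ + ⋯ + w_{j-1})`, where `T_j : W_j → V_j` is injective linear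
and `u_j` is a polynomial map.  Then there are `C > 0` and `m > 0` with
`‖φ w‖ ≥ C * (1 + ‖w‖²) ^ m` for all `w ∈ W`. -/
theorem harish_chandra_key_lemma
    {W V : Type*} [NormedAddCommGroup W] [InnerProductSpace ℝ W] [FiniteDimensional ℝ W]
    [NormedAddCommGroup V] [InnerProductSpace ℝ V] [FiniteDimensional ℝ V]
    [Nontrivial W] [Nontrivial V]
    (q p : ℕ) (hq : 1 ≤ q) (hqp : q ≤ p)
    (Wsub : ℕ → Submodule ℝ W) (Vsub : ℕ → Submodule ℝ V)
    -- the `W_j`, `1 ≤ j ≤ q`, are pairwise orthogonal and span `W`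
    (hWorth : ∀ i ∈ Finset.Icc 1 q, ∀ j ∈ Finset.Icc 1 q, i ≠ j →
      ∀ x ∈ Wsub i, ∀ y ∈ Wsub j, ⟪x, y⟫ = 0)
    (hWspan : (⨆ j ∈ Finset.Icc 1 q, Wsub j) = ⊤)
    -- the `V_j`, `0 ≤ j ≤ p`, are pairwise orthogonal and span `V`
    (hVorth : ∀ i ∈ Finset.range (p + 1), ∀ j ∈ Finset.range (p + 1), i ≠ j →
      ∀ x ∈ Vsub i, ∀ y ∈ Vsub j, ⟪x, y⟫ = 0)
    (hVspan : (⨆ j ∈ Finset.range (p + 1), Vsub j) = ⊤)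
    (φ : W → V) (v₀ : V) (hv₀ : v₀ ≠ 0)
    -- (i) the `V₀`-component of `φ w` is the fixed nonzero vector `v₀`
    (h₀ : ∀ w : W, (Submodule.orthogonalProjectionOnto (Vsub 0) (φ w) : V) = v₀)
    (T : (j : ℕ) → (Wsub j →ₗ[ℝ] V))
    (hTrange : ∀ j ∈ Finset.Icc 1 q, ∀ x : Wsub j, T j x ∈ Vsub j)
    (hTinj : ∀ j ∈ Finset.Icc 1 q, Function.Injective (T j))
    (u : ℕ → W → V)
    (hupoly : ∀ j, 1 < j → j ≤ q → IsPolynomialMap (u j))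
    (hurange : ∀ j, 1 < j → j ≤ q → ∀ x : W, u j x ∈ Vsub j)
    -- (ii) the `V₁`-component of `φ w` is `T₁ w₁`
    (h₁ : ∀ w : W,
      (Submodule.orthogonalProjectionOnto (Vsub 1) (φ w) : V) = T 1 (Submodule.orthogonalProjectionOnto (Wsub 1) w))
    -- (iii) for `1 < j ≤ q`, the `V_j`-component of `φ w` is
    -- `T_j w_j + u_j (w₁ + ⋯ + w_{j-1})`
    (hj : ∀ j, 1 < j → j ≤ q → ∀ w : W,
      (Submodule.orthogonalProjectionOnto (Vsub j) (φ w) : V) =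
        T j (Submodule.orthogonalProjectionOnto (Wsub j) w) +
          u j (∑ i ∈ Finset.Icc 1 (j - 1), (Submodule.orthogonalProjectionOnto (Wsub i) w : W))) :
    ∃ C : ℝ, 0 < C ∧ ∃ m : ℝ, 0 < m ∧
      ∀ w : W, ‖φ w‖ ≥ C * (1 + ‖w‖ ^ 2) ^ m := by
  classical
  have hb : (0:ℝ) < ‖v₀‖ := norm_pos_iff.mpr hv₀
  set b : ℝ := ‖v₀‖ with hbdef
  have hMb : ∀ w : W, b ≤ ‖φ w‖ := by
    intro w
    calc b = ‖(Submodule.orthogonalProjectionOnto (Vsub 0) (φ w) : V)‖ := by rw [h₀ w]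
      _ ≤ ‖φ w‖ := norm_orthogonalProjection_le'' _ _
  have hN1 : ∀ w : W, 1 ≤ ‖φ w‖ / b := fun w => (one_le_div hb).mpr (hMb w)
  have hprojV : ∀ (j : ℕ) (w : W), ‖(Submodule.orthogonalProjectionOnto (Vsub j) (φ w) : V)‖ ≤ ‖φ w‖ :=
    fun j w => norm_orthogonalProjection_le'' _ _
  -- key induction
  have key : ∀ j : ℕ, j ≤ q → ∃ K : ℝ, 1 ≤ K ∧ ∃ e : ℕ, 1 ≤ e ∧ ∀ w : W,
      1 + ∑ i ∈ Finset.Icc 1 j, ‖(Submodule.orthogonalProjectionOnto (Wsub i) w : W)‖ ^ 2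
        ≤ K * (‖φ w‖ / b) ^ e := by
    intro j
    induction j with
    | zero =>
      intro _
      refine ⟨1, le_refl 1, 1, le_refl 1, fun w => ?_⟩
      rw [show Finset.Icc 1 0 = ∅ from Finset.Icc_eq_empty (by omega), Finset.sum_empty]
      simpa using hN1 w
    | succ j IH =>
      intro hjq
      obtain ⟨K, hK1, e, he1, hKe⟩ := IH (Nat.le_of_succ_le hjq)
      have hKpos : (0:ℝ) < K := lt_of_lt_of_le one_pos hK1
      have hqR : (0:ℝ) < q := by exact_mod_cast hq
      have hj1mem : j + 1 ∈ Finset.Icc 1 q :=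
        Finset.mem_Icc.mpr ⟨Nat.succ_le_succ (Nat.zero_le j), hjq⟩
      obtain ⟨c, hc, hcT⟩ := linear_injective_bound (T (j+1)) (hTinj _ hj1mem)
      have hcT' : ∀ x : Wsub (j+1), c * ‖(x : W)‖ ≤ ‖T (j+1) x‖ := by
        intro x; rw [← Submodule.coe_norm]; exact hcT x
      have main : ∃ G : ℝ, 0 < G ∧ ∃ E : ℕ, 1 ≤ E ∧ ∀ w : W,
          ‖(Submodule.orthogonalProjectionOnto (Wsub (j+1)) w : W)‖ ≤ G * (‖φ w‖ / b) ^ E := by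
        rcases Nat.eq_zero_or_pos j with hj0 | hjpos
        · subst hj0
          refine ⟨b / c, by positivity, 1, le_refl 1, fun w => ?_⟩
          have hTle : c * ‖(Submodule.orthogonalProjectionOnto (Wsub 1) w : W)‖ ≤ ‖φ w‖ := by
            calc c * ‖(Submodule.orthogonalProjectionOnto (Wsub 1) w : W)‖
                ≤ ‖T 1 (Submodule.orthogonalProjectionOnto (Wsub 1) w)‖ := hcT' _
              _ = ‖(Submodule.orthogonalProjectionOnto (Vsub 1) (φ w) : V)‖ := by rw [h₁ w]
              _ ≤ ‖φ w‖ := hprojV 1 w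
          rw [pow_one, div_mul_eq_mul_div, le_div_iff₀ hc]
          have hbN : b * (‖φ w‖ / b) = ‖φ w‖ := by field_simp
          nlinarith [hTle]
        · have hj1lt : 1 < j + 1 := Nat.succ_lt_succ hjpos
          obtain ⟨D, hD, d, hDu⟩ := isPolynomialMap_bound (hupoly (j+1) hj1lt hjq)
          refine ⟨(b + D * ((q:ℝ)*K)^d)/c, by positivity, max 1 (e*d), le_max_left _ _,
            fun w => ?_⟩
          have hjw := hj (j+1) hj1lt hjq w
          have hsimp : Finset.Icc 1 (j+1-1) = Finset.Icc 1 j := by norm_num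
          rw [hsimp] at hjw
          set s : W := ∑ i ∈ Finset.Icc 1 j, (Submodule.orthogonalProjectionOnto (Wsub i) w : W) with hs
          set N : ℝ := ‖φ w‖ / b with hNdef
          have hN : 1 ≤ N := hN1 w
          have hN0 : (0:ℝ) ≤ N := le_trans zero_le_one hN
          have hsnorm : 1 + ‖s‖^2 ≤ (q:ℝ) * (K * N^e) := by
            have h1 : ‖s‖ ≤ ∑ i ∈ Finset.Icc 1 j,
                ‖(Submodule.orthogonalProjectionOnto (Wsub i) w : W)‖ := norm_sum_le _ _
            have h2 : ‖s‖^2 ≤ ((Finset.Icc 1 j).card : ℝ) * ∑ i ∈ Finset.Icc 1 j,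
                ‖(Submodule.orthogonalProjectionOnto (Wsub i) w : W)‖^2 := by
              calc ‖s‖^2 ≤ (∑ i ∈ Finset.Icc 1 j,
                  ‖(Submodule.orthogonalProjectionOnto (Wsub i) w : W)‖)^2 :=
                    pow_le_pow_left₀ (norm_nonneg s) h1 2
                _ ≤ _ := sq_sum_le_card_mul_sum_sq
            have hcard : ((Finset.Icc 1 j).card : ℝ) ≤ (q:ℝ) := by
              rw [Nat.card_Icc]
              have : j + 1 - 1 ≤ q := by omega
              exact_mod_cast this
            have hS0 : (0:ℝ) ≤ ∑ i ∈ Finset.Icc 1 j,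
                ‖(Submodule.orthogonalProjectionOnto (Wsub i) w : W)‖^2 :=
              Finset.sum_nonneg fun i _ => sq_nonneg _
            have hKN := hKe w
            have hq1 : (1:ℝ) ≤ q := by exact_mod_cast hq
            nlinarith [mul_le_mul_of_nonneg_left hKN hqR.le]
          have husb : ‖u (j+1) s‖ ≤ D * ((q:ℝ) * (K * N^e))^d := by
            refine (hDu s).trans ?_
            exact mul_le_mul_of_nonneg_left (pow_le_pow_left₀ (by positivity) hsnorm d) hD
          have hT1 : c * ‖(Submodule.orthogonalProjectionOnto (Wsub (j+1)) w : W)‖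
              ≤ ‖φ w‖ + D * ((q:ℝ) * (K * N^e))^d := by
            calc c * ‖(Submodule.orthogonalProjectionOnto (Wsub (j+1)) w : W)‖
                ≤ ‖T (j+1) (Submodule.orthogonalProjectionOnto (Wsub (j+1)) w)‖ := hcT' _
              _ = ‖(Submodule.orthogonalProjectionOnto (Vsub (j+1)) (φ w) : V) - u (j+1) s‖ := by
                  rw [hjw, add_sub_cancel_right]
              _ ≤ ‖(Submodule.orthogonalProjectionOnto (Vsub (j+1)) (φ w) : V)‖ + ‖u (j+1) s‖ :=
                  norm_sub_le _ _
              _ ≤ ‖φ w‖ + D * ((q:ℝ) * (K * N^e))^d := add_le_add (hprojV _ w) husb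
          have hrw : ((q:ℝ) * (K * N^e))^d = ((q:ℝ)*K)^d * N^(e*d) := by
            rw [← mul_assoc, mul_pow, pow_mul]
          have hbN : ‖φ w‖ = b * N := by rw [hNdef]; field_simp
          rw [div_mul_eq_mul_div, le_div_iff₀ hc]
          have hpow1 : N ≤ N ^ (max 1 (e*d)) := by
            calc N = N ^ 1 := (pow_one N).symm
              _ ≤ N ^ (max 1 (e*d)) := pow_le_pow_right₀ hN (le_max_left _ _)
          have hpow2 : N ^ (e*d) ≤ N ^ (max 1 (e*d)) := pow_le_pow_right₀ hN (le_max_right _ _)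
          have hDq : (0:ℝ) ≤ D * ((q:ℝ)*K)^d := by positivity
          nlinarith [hT1, mul_le_mul_of_nonneg_left hpow1 hb.le,
            mul_le_mul_of_nonneg_left hpow2 hDq, hrw]
      obtain ⟨G, hG, E, hE1, hGE⟩ := main
      refine ⟨K + G^2, by nlinarith [sq_nonneg G], max e (2*E), le_trans he1 (le_max_left _ _), fun w => ?_⟩
      set N : ℝ := ‖φ w‖ / b with hNdef
      have hN : 1 ≤ N := hN1 w
      rw [Finset.sum_Icc_succ_top (Nat.succ_le_succ (Nat.zero_le j))]
      have h1 := hKe w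
      have h2 := hGE w
      have h2' : ‖(Submodule.orthogonalProjectionOnto (Wsub (j+1)) w : W)‖^2 ≤ G^2 * N^(2*E) := by
        calc ‖(Submodule.orthogonalProjectionOnto (Wsub (j+1)) w : W)‖^2 ≤ (G * N^E)^2 :=
            pow_le_pow_left₀ (norm_nonneg _) h2 2
          _ = G^2 * N^(2*E) := by rw [mul_pow, ← pow_mul, mul_comm E 2]
      have hNe : K * N ^ e ≤ K * N ^ (max e (2*E)) :=
        mul_le_mul_of_nonneg_left (pow_le_pow_right₀ hN (le_max_left _ _)) (le_of_lt hKpos)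
      have hNE : G^2 * N^(2*E) ≤ G^2 * N ^ (max e (2*E)) :=
        mul_le_mul_of_nonneg_left (pow_le_pow_right₀ hN (le_max_right _ _)) (by positivity)
      calc 1 + ((∑ i ∈ Finset.Icc 1 j, ‖(Submodule.orthogonalProjectionOnto (Wsub i) w : W)‖ ^ 2)
            + ‖(Submodule.orthogonalProjectionOnto (Wsub (j+1)) w : W)‖ ^ 2)
          = (1 + ∑ i ∈ Finset.Icc 1 j, ‖(Submodule.orthogonalProjectionOnto (Wsub i) w : W)‖ ^ 2)
            + ‖(Submodule.orthogonalProjectionOnto (Wsub (j+1)) w : W)‖ ^ 2 := by ring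
        _ ≤ K * N ^ e + G^2 * N^(2*E) := add_le_add h1 h2'
        _ ≤ K * N ^ (max e (2*E)) + G^2 * N ^ (max e (2*E)) := add_le_add hNe hNE
        _ = (K + G^2) * N ^ (max e (2*E)) := by ring
  obtain ⟨K, hK1, e, he1, hKe⟩ := key q le_rfl
  have hKpos : (0:ℝ) < K := lt_of_lt_of_le one_pos hK1
  have hqR : (0:ℝ) < q := by exact_mod_cast hq
  have hqK : (0:ℝ) < (q:ℝ)*K := mul_pos hqR hKpos
  have heR : (0:ℝ) < (e:ℝ) := by exact_mod_cast he1
  -- decomposition of w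
  have hdecomp : ∀ w : W,
      (∑ i ∈ Finset.Icc 1 q, (Submodule.orthogonalProjectionOnto (Wsub i) w : W)) = w := by
    intro w
    set r : W := w - ∑ k ∈ Finset.Icc 1 q, (Submodule.orthogonalProjectionOnto (Wsub k) w : W) with hrdef
    have hrorth : ∀ i ∈ Finset.Icc 1 q, ∀ x ∈ Wsub i, ⟪r, x⟫ = 0 := by
      intro i hi x hx
      rw [hrdef, inner_sub_left, sum_inner]
      have hsum : ∑ k ∈ Finset.Icc 1 q, ⟪(Submodule.orthogonalProjectionOnto (Wsub k) w : W), x⟫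
          = ⟪(Submodule.orthogonalProjectionOnto (Wsub i) w : W), x⟫ :=
        Finset.sum_eq_single_of_mem i hi (fun k hk hki =>
          hWorth k hk i hi hki _ (SetLike.coe_mem _) x hx)
      rw [hsum, ← inner_sub_left]
      exact (Submodule.mem_orthogonal' _ _).1 (Submodule.sub_starProjection_mem_orthogonal w) x hx
    have hker : (⨆ i ∈ Finset.Icc 1 q, Wsub i) ≤ LinearMap.ker (innerSL ℝ r : W →ₗ[ℝ] ℝ) := by
      refine iSup₂_le fun i hi => ?_
      intro x hx
      simpa using hrorth i hi x hx
    rw [hWspan] at hker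
    have hr0 : r = 0 := by
      have h := hker (Submodule.mem_top (x := r))
      have h' : ⟪r, r⟫ = 0 := by simpa using h
      exact inner_self_eq_zero.mp h'
    have := sub_eq_zero.mp hr0
    exact this.symm
  have hw2 : ∀ w : W, 1 + ‖w‖^2 ≤ (q:ℝ) * (K * (‖φ w‖ / b)^e) := by
    intro w
    have hS : ‖w‖^2 ≤ (q:ℝ) * ∑ i ∈ Finset.Icc 1 q,
        ‖(Submodule.orthogonalProjectionOnto (Wsub i) w : W)‖^2 := by
      conv_lhs => rw [← hdecomp w]
      calc ‖∑ i ∈ Finset.Icc 1 q, (Submodule.orthogonalProjectionOnto (Wsub i) w : W)‖^2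
          ≤ (∑ i ∈ Finset.Icc 1 q, ‖(Submodule.orthogonalProjectionOnto (Wsub i) w : W)‖)^2 :=
            pow_le_pow_left₀ (norm_nonneg _) (norm_sum_le _ _) 2
        _ ≤ ((Finset.Icc 1 q).card : ℝ) * ∑ i ∈ Finset.Icc 1 q,
            ‖(Submodule.orthogonalProjectionOnto (Wsub i) w : W)‖^2 := sq_sum_le_card_mul_sum_sq
        _ ≤ (q:ℝ) * ∑ i ∈ Finset.Icc 1 q,
            ‖(Submodule.orthogonalProjectionOnto (Wsub i) w : W)‖^2 := by
            refine mul_le_mul_of_nonneg_right ?_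
              (Finset.sum_nonneg fun i _ => sq_nonneg _)
            rw [Nat.card_Icc]
            exact_mod_cast Nat.le_refl q |>.trans_eq' (by omega)
    have hKN := hKe w
    have hq1 : (1:ℝ) ≤ q := by exact_mod_cast hq
    have hS0 : (0:ℝ) ≤ ∑ i ∈ Finset.Icc 1 q,
        ‖(Submodule.orthogonalProjectionOnto (Wsub i) w : W)‖^2 :=
      Finset.sum_nonneg fun i _ => sq_nonneg _
    nlinarith [mul_le_mul_of_nonneg_left hKN hqR.le]
  refine ⟨b / ((q:ℝ)*K) ^ ((e:ℝ)⁻¹), div_pos hb (Real.rpow_pos_of_pos hqK _),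
    (e:ℝ)⁻¹, inv_pos.mpr heR, fun w => ?_⟩
  set N : ℝ := ‖φ w‖ / b with hNdef
  have hN : 1 ≤ N := hN1 w
  have hN0 : (0:ℝ) ≤ N := le_trans zero_le_one hN
  have hX : (0:ℝ) < 1 + ‖w‖^2 := by positivity
  have h1 : 1 + ‖w‖^2 ≤ ((q:ℝ)*K) * N^e := by nlinarith [hw2 w]
  have h2 : (1+‖w‖^2) ^ ((e:ℝ)⁻¹) ≤ (((q:ℝ)*K) * N^e) ^ ((e:ℝ)⁻¹) :=
    Real.rpow_le_rpow hX.le h1 (inv_nonneg.mpr heR.le)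
  have h3 : (((q:ℝ)*K) * N^e) ^ ((e:ℝ)⁻¹) = ((q:ℝ)*K)^((e:ℝ)⁻¹) * N := by
    rw [Real.mul_rpow hqK.le (by positivity : (0:ℝ) ≤ N^e)]
    congr 1
    rw [← Real.rpow_natCast N e, ← Real.rpow_mul hN0, mul_inv_cancel₀ (ne_of_gt heR),
      Real.rpow_one]
  have hbN : b * N = ‖φ w‖ := by rw [hNdef]; field_simp
  have hrp : (0:ℝ) < ((q:ℝ)*K) ^ ((e:ℝ)⁻¹) := Real.rpow_pos_of_pos hqK _
  calc b / ((q:ℝ)*K) ^ ((e:ℝ)⁻¹) * (1+‖w‖^2) ^ ((e:ℝ)⁻¹)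
      ≤ b / ((q:ℝ)*K) ^ ((e:ℝ)⁻¹) * (((q:ℝ)*K)^((e:ℝ)⁻¹) * N) := by
        exact mul_le_mul_of_nonneg_left (h2.trans (le_of_eq h3)) (by positivity)
    _ = b * N := by field_simp
    _ = ‖φ w‖ := hbN
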